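/- Let K be a positive integer and A, B ∈ M₂(ℤ/Kℤ) matrices such that for every prime p dividing K, neither A nor B reduces to a scalar matrix mod p. Then A and B are GL₂(ℤ/Kℤ)-conjugate if and only if tr A = tr B and det A = det B. -/

import Mathlib

open Matrix

lemma isUnit_of_cast_ne_zero {K : ℕ} (hK : K ≠ 0) (z : ZMod K)
    (h : ∀ p : ℕ, p.Prime → ∀ hd : p ∣ K, ZMod.castHom hd (ZMod p) z ≠ 0) : IsUnit z := by
  haveI : NeZero K := ⟨hK⟩
  rw [← ZMod.natCast_zmod_val z, ZMod.isUnit_iff_coprime]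
  by_contra hc
  obtain ⟨p, hp, hpd⟩ := Nat.exists_prime_and_dvd hc
  refine h p hp (hpd.trans (Nat.gcd_dvd_right _ _)) ?_
  rw [ZMod.castHom_apply, ← ZMod.natCast_val, ZMod.natCast_eq_zero_iff]
  exact hpd.trans (Nat.gcd_dvd_left _ _)

lemma castHom_castHom {m n K : ℕ} (h1 : m ∣ n) (h2 : n ∣ K) (z : ZMod K) :
    ZMod.castHom h1 (ZMod m) (ZMod.castHom h2 (ZMod n) z) =
      ZMod.castHom (h1.trans h2) (ZMod m) z := by
  rw [← ZMod.castHom_comp h1 h2]; rfl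

lemma pair_surj {m n : ℕ} (h : m.Coprime n) (a : ZMod m) (b : ZMod n) :
    ∃ z : ZMod (m*n), ZMod.castHom (dvd_mul_right m n) (ZMod m) z = a ∧
      ZMod.castHom (dvd_mul_left n m) (ZMod n) z = b := by
  refine ⟨(ZMod.chineseRemainder h).symm (a, b), ?_, ?_⟩
  · have : ZMod.castHom (dvd_mul_right m n) (ZMod m) =
        (RingHom.fst (ZMod m) (ZMod n)).comp
          ((ZMod.chineseRemainder h) : ZMod (m*n) →+* ZMod m × ZMod n) :=
      RingHom.ext_zmod _ _
    rw [this]; simp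
  · have : ZMod.castHom (dvd_mul_left n m) (ZMod n) =
        (RingHom.snd (ZMod m) (ZMod n)).comp
          ((ZMod.chineseRemainder h) : ZMod (m*n) →+* ZMod m × ZMod n) :=
      RingHom.ext_zmod _ _
    rw [this]; simp

lemma exists_unit_quadratic : ∀ K : ℕ, K ≠ 0 → ∀ α β γ : ZMod K,
    (∀ p : ℕ, p.Prime → ∀ hd : p ∣ K,
      ¬(ZMod.castHom hd (ZMod p) α = 0 ∧ ZMod.castHom hd (ZMod p) β = 0 ∧
        ZMod.castHom hd (ZMod p) γ = 0)) →
    ∃ x y : ZMod K, IsUnit (α * x^2 + β * (x*y) + γ * y^2) := by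
  intro K
  induction K using Nat.strong_induction_on with
  | _ K IH =>
  intro hK0 α β γ hcoef
  rcases eq_or_ne K 1 with rfl | hK1
  · exact ⟨0, 0, isUnit_of_subsingleton _⟩
  have hpprime : K.minFac.Prime := Nat.minFac_prime hK1
  have hpdvd : K.minFac ∣ K := Nat.minFac_dvd K
  by_cases hpp : ∀ q : ℕ, q.Prime → q ∣ K → q = K.minFac
  · by_cases hα : ZMod.castHom hpdvd (ZMod K.minFac) α = 0
    · by_cases hγ : ZMod.castHom hpdvd (ZMod K.minFac) γ = 0
      · -- β must be nonzero mod p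
        have hβ : ZMod.castHom hpdvd (ZMod K.minFac) β ≠ 0 := fun h0 =>
          hcoef K.minFac hpprime hpdvd ⟨hα, h0, hγ⟩
        refine ⟨1, 1, isUnit_of_cast_ne_zero hK0 _ ?_⟩
        intro q hq hqd
        obtain rfl : q = K.minFac := hpp q hq hqd
        simp only [map_add, _root_.map_mul, map_pow, one_pow, mul_one, hα, hγ,
          zero_mul, zero_add, add_zero]
        exact hβ
      · refine ⟨0, 1, isUnit_of_cast_ne_zero hK0 _ ?_⟩
        intro q hq hqd
        obtain rfl : q = K.minFac := hpp q hq hqd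
        simpa using hγ
    · refine ⟨1, 0, isUnit_of_cast_ne_zero hK0 _ ?_⟩
      intro q hq hqd
      obtain rfl : q = K.minFac := hpp q hq hqd
      simpa using hα
  · push_neg at hpp
    obtain ⟨q, hq, hqK, hqne⟩ := hpp
    obtain ⟨m, n, hm1, hn1, hcop, rfl⟩ :
        ∃ m n : ℕ, 1 < m ∧ 1 < n ∧ m.Coprime n ∧ K = m * n := by
      have he : 0 < K.factorization K.minFac :=
        hpprime.factorization_pos_of_dvd hK0 hpdvd
      have hnpos : 0 < ordCompl[K.minFac] K := Nat.ordCompl_pos _ hK0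
      have hqn : q ∣ ordCompl[K.minFac] K := by
        have hqm : ¬ q ∣ K.minFac ^ K.factorization K.minFac := by
          intro hd
          exact hqne ((Nat.prime_dvd_prime_iff_eq hq hpprime).mp (hq.dvd_of_dvd_pow hd))
        have : q ∣ K.minFac ^ K.factorization K.minFac * ordCompl[K.minFac] K := by
          rwa [Nat.ordProj_mul_ordCompl_eq_self]
        rcases (Nat.Prime.dvd_mul hq).mp this with h | h
        · exact absurd h hqm
        · exact h
      refine ⟨K.minFac ^ K.factorization K.minFac, ordCompl[K.minFac] K,
        ?_, ?_, ?_, ?_⟩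
      · exact Nat.one_lt_pow he.ne' hpprime.one_lt
      · exact hq.one_lt.trans_le (Nat.le_of_dvd hnpos hqn)
      · exact (Nat.coprime_ordCompl hpprime hK0).pow_left _
      · exact (Nat.ordProj_mul_ordCompl_eq_self K _).symm
    have hmdvd : m ∣ m * n := dvd_mul_right m n
    have hndvd : n ∣ m * n := dvd_mul_left n m
    have hm0 : m ≠ 0 := by omega
    have hn0 : n ≠ 0 := by omega
    have hmlt : m < m * n := by
      have h := (Nat.mul_lt_mul_left (show 0 < m by omega)).mpr hn1
      simpa using h
    have hnlt : n < m * n := by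
      have h := (Nat.mul_lt_mul_right (show 0 < n by omega)).mpr hm1
      simpa using h
    obtain ⟨x₁, y₁, hu₁⟩ := IH m hmlt hm0 (ZMod.castHom hmdvd _ α)
      (ZMod.castHom hmdvd _ β) (ZMod.castHom hmdvd _ γ) (by
        intro p hp hpd
        rw [castHom_castHom, castHom_castHom, castHom_castHom]
        exact hcoef p hp _)
    obtain ⟨x₂, y₂, hu₂⟩ := IH n hnlt hn0 (ZMod.castHom hndvd _ α)
      (ZMod.castHom hndvd _ β) (ZMod.castHom hndvd _ γ) (by
        intro p hp hpd
        rw [castHom_castHom, castHom_castHom, castHom_castHom]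
        exact hcoef p hp _)
    obtain ⟨x, hx1, hx2⟩ := pair_surj hcop x₁ x₂
    obtain ⟨y, hy1, hy2⟩ := pair_surj hcop y₁ y₂
    refine ⟨x, y, isUnit_of_cast_ne_zero (by positivity) _ ?_⟩
    intro p hp hpd
    haveI : Fact (1 < p) := ⟨hp.one_lt⟩
    rcases (Nat.Prime.dvd_mul hp).mp hpd with hpm | hpn
    · have : ZMod.castHom hpd (ZMod p) (α * x ^ 2 + β * (x * y) + γ * y ^ 2) =
          ZMod.castHom hpm (ZMod p)
            (ZMod.castHom hmdvd (ZMod m) (α * x ^ 2 + β * (x * y) + γ * y ^ 2)) :=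
        (castHom_castHom _ _ _).symm
      rw [this]
      have : ZMod.castHom hmdvd (ZMod m) (α * x ^ 2 + β * (x * y) + γ * y ^ 2) =
          (ZMod.castHom hmdvd _ α) * x₁ ^ 2 + (ZMod.castHom hmdvd _ β) * (x₁ * y₁)
            + (ZMod.castHom hmdvd _ γ) * y₁ ^ 2 := by
        simp only [map_add, _root_.map_mul, map_pow, hx1, hy1]
      rw [this]
      exact (hu₁.map _).ne_zero
    · have : ZMod.castHom hpd (ZMod p) (α * x ^ 2 + β * (x * y) + γ * y ^ 2) =
          ZMod.castHom hpn (ZMod p)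
            (ZMod.castHom hndvd (ZMod n) (α * x ^ 2 + β * (x * y) + γ * y ^ 2)) :=
        (castHom_castHom _ _ _).symm
      rw [this]
      have : ZMod.castHom hndvd (ZMod n) (α * x ^ 2 + β * (x * y) + γ * y ^ 2) =
          (ZMod.castHom hndvd _ α) * x₂ ^ 2 + (ZMod.castHom hndvd _ β) * (x₂ * y₂)
            + (ZMod.castHom hndvd _ γ) * y₂ ^ 2 := by
        simp only [map_add, _root_.map_mul, map_pow, hx2, hy2]
      rw [this]
      exact (hu₂.map _).ne_zero

/-- A matrix over `ℤ/Kℤ` is nonscalar modulo `p` (for `p ∣ K`) if its reduction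
mod `p` is not a scalar matrix. -/
def NonscalarMod {K : ℕ} (p : ℕ) (h : p ∣ K) (A : Matrix (Fin 2) (Fin 2) (ZMod K)) : Prop :=
  ¬ ∃ lam : ZMod p, A.map (fun x => ZMod.castHom h (ZMod p) x) =
      lam • (1 : Matrix (Fin 2) (Fin 2) (ZMod p))

lemma conj_companion {K : ℕ} (hK : 0 < K) (M : Matrix (Fin 2) (Fin 2) (ZMod K))
    (hM : ∀ p : ℕ, p.Prime → ∀ h : p ∣ K, NonscalarMod p h M) :
    ∃ u : GL (Fin 2) (ZMod K),
      (u : Matrix (Fin 2) (Fin 2) (ZMod K)) * (Matrix.of !![0, -M.det; 1, M.trace]) *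
        ((u⁻¹ : GL (Fin 2) (ZMod K)) : Matrix (Fin 2) (Fin 2) (ZMod K)) = M := by
  obtain ⟨x, y, hu⟩ := exists_unit_quadratic K hK.ne' (M 1 0) (M 1 1 - M 0 0) (-(M 0 1)) (by
    rintro p hp hd ⟨h1, h2, h3⟩
    rw [map_sub, sub_eq_zero] at h2
    rw [map_neg, neg_eq_zero] at h3
    simp only [ZMod.castHom_apply] at h1 h2 h3
    refine hM p hp hd ⟨ZMod.castHom hd (ZMod p) (M 0 0), ?_⟩
    ext i j
    fin_cases i <;> fin_cases j <;>
      simp [Matrix.map_apply, Matrix.smul_apply, Matrix.one_apply, h1, h2, h3])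
  set g : Matrix (Fin 2) (Fin 2) (ZMod K) :=
    Matrix.of !![x, M 0 0 * x + M 0 1 * y; y, M 1 0 * x + M 1 1 * y] with hg
  have hdet : g.det = M 1 0 * x^2 + (M 1 1 - M 0 0) * (x*y) + (-(M 0 1)) * y^2 := by
    change Matrix.det !![x, M 0 0 * x + M 0 1 * y; y, M 1 0 * x + M 1 1 * y] = _
    simp [Matrix.det_fin_two]; ring
  have hgu : IsUnit g := (Matrix.isUnit_iff_isUnit_det g).mpr (hdet ▸ hu)
  obtain ⟨u, huv⟩ := hgu
  have key : M * g = g * Matrix.of !![0, -M.det; 1, M.trace] := by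
    change M * !![x, M 0 0 * x + M 0 1 * y; y, M 1 0 * x + M 1 1 * y] =
      !![x, M 0 0 * x + M 0 1 * y; y, M 1 0 * x + M 1 1 * y] * !![0, -M.det; 1, M.trace]
    ext i j
    fin_cases i <;> fin_cases j <;>
      (simp [hg, Matrix.mul_apply, Fin.sum_univ_two, Matrix.det_fin_two,
          Matrix.trace_fin_two]
       try ring)
  have key' : M * (u : Matrix (Fin 2) (Fin 2) (ZMod K)) =
      (u : Matrix (Fin 2) (Fin 2) (ZMod K)) * Matrix.of !![0, -M.det; 1, M.trace] := by
    rw [huv]; exact key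
  refine ⟨u, ?_⟩
  rw [← key', mul_assoc, Units.mul_inv, mul_one]

theorem stmt_8 (K : ℕ) (hK : 0 < K) (A B : Matrix (Fin 2) (Fin 2) (ZMod K))
    (hA : ∀ p : ℕ, p.Prime → ∀ h : p ∣ K, NonscalarMod p h A)
    (hB : ∀ p : ℕ, p.Prime → ∀ h : p ∣ K, NonscalarMod p h B) :
    (∃ g : GL (Fin 2) (ZMod K),
        (g : Matrix (Fin 2) (Fin 2) (ZMod K)) * A *
          ((g⁻¹ : GL (Fin 2) (ZMod K)) : Matrix (Fin 2) (Fin 2) (ZMod K)) = B) ↔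
      (A.trace = B.trace ∧ A.det = B.det) := by
  constructor
  · rintro ⟨g, rfl⟩
    constructor
    · rw [Matrix.trace_mul_cycle, Units.inv_mul, one_mul]
    · have h1 : ((g : Matrix (Fin 2) (Fin 2) (ZMod K))).det *
          ((g⁻¹ : GL (Fin 2) (ZMod K)) : Matrix (Fin 2) (Fin 2) (ZMod K)).det = 1 := by
        rw [← Matrix.det_mul, Units.mul_inv, Matrix.det_one]
      rw [Matrix.det_mul, Matrix.det_mul]
      linear_combination (-(A.det)) * h1
  · rintro ⟨ht, hd⟩
    obtain ⟨u, hu⟩ := conj_companion hK A hA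
    obtain ⟨v, hv⟩ := conj_companion hK B hB
    rw [ht, hd] at hu
    set C := Matrix.of !![(0 : ZMod K), -B.det; 1, B.trace] with hC
    refine ⟨v * u⁻¹, ?_⟩
    have e1 : ((v * u⁻¹ : GL (Fin 2) (ZMod K)) : Matrix (Fin 2) (Fin 2) (ZMod K)) =
        (v : Matrix (Fin 2) (Fin 2) (ZMod K)) * ((u⁻¹ : GL (Fin 2) (ZMod K)) :
          Matrix (Fin 2) (Fin 2) (ZMod K)) := Units.val_mul _ _
    have e2 : (((v * u⁻¹)⁻¹ : GL (Fin 2) (ZMod K)) : Matrix (Fin 2) (Fin 2) (ZMod K)) =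
        (u : Matrix (Fin 2) (Fin 2) (ZMod K)) * ((v⁻¹ : GL (Fin 2) (ZMod K)) :
          Matrix (Fin 2) (Fin 2) (ZMod K)) := by
      rw [_root_.mul_inv_rev, inv_inv, Units.val_mul]
    rw [← hu, ← hv, e1, e2]
    simp only [mul_assoc, Units.inv_mul_cancel_left]
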